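/- The semigroup ring Z⟨X⟩ of the free monoid on a set X over the integers, regarded as a semiring under polynomial addition and multiplication, is isomorphic as a semiring to the quotient of the free semiring on generators X ∪ X^{-1} ∪ {1^{-1}} by the congruence generated by: x + x^{-1} = 0, 1 + 1^{-1} = 0, x^{-1}y^{-1} = xy, x y^{-1} = x^{-1} y, x^ε 1^{-1} = x^{-ε}, and 1^{-1} x^ε = x^{-ε} for all x, y ∈ X and ε = ±1. -/

import Mathlib

/-- The defining relations of the semiring `ℤ⟨X⟩` as a quotient of the free
semiring (= free `ℕ`-algebra) on the generators `X ∪ X⁻¹ ∪ {1⁻¹}`, encoded on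
`Option (X ⊕ X)` with `some (.inl x) = x`, `some (.inr x) = x⁻¹`,
`none = 1⁻¹`:  `x + x⁻¹ = 0`, `1 + 1⁻¹ = 0`, `x⁻¹y⁻¹ = xy`, `xy⁻¹ = x⁻¹y`,
`x^ε·1⁻¹ = x^(-ε)` and `1⁻¹·x^ε = x^(-ε)` for `x, y ∈ X`, `ε = ±1`. -/
def intSemiringRel (X : Type*) :
    FreeAlgebra ℕ (Option (X ⊕ X)) → FreeAlgebra ℕ (Option (X ⊕ X)) → Prop :=
  fun p q =>
    (∃ x : X, p = FreeAlgebra.ι ℕ (some (Sum.inl x)) +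
        FreeAlgebra.ι ℕ (some (Sum.inr x)) ∧ q = 0) ∨
    (p = 1 + FreeAlgebra.ι ℕ (none : Option (X ⊕ X)) ∧ q = 0) ∨
    (∃ x y : X, p = FreeAlgebra.ι ℕ (some (Sum.inr x)) *
        FreeAlgebra.ι ℕ (some (Sum.inr y)) ∧
      q = FreeAlgebra.ι ℕ (some (Sum.inl x)) *
        FreeAlgebra.ι ℕ (some (Sum.inl y))) ∨
    (∃ x y : X, p = FreeAlgebra.ι ℕ (some (Sum.inl x)) *
        FreeAlgebra.ι ℕ (some (Sum.inr y)) ∧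
      q = FreeAlgebra.ι ℕ (some (Sum.inr x)) *
        FreeAlgebra.ι ℕ (some (Sum.inl y))) ∨
    (∃ x : X,
      (p = FreeAlgebra.ι ℕ (some (Sum.inl x)) *
          FreeAlgebra.ι ℕ (none : Option (X ⊕ X)) ∧
        q = FreeAlgebra.ι ℕ (some (Sum.inr x))) ∨
      (p = FreeAlgebra.ι ℕ (some (Sum.inr x)) *
          FreeAlgebra.ι ℕ (none : Option (X ⊕ X)) ∧
        q = FreeAlgebra.ι ℕ (some (Sum.inl x)))) ∨
    (∃ x : X,
      (p = FreeAlgebra.ι ℕ (none : Option (X ⊕ X)) *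
          FreeAlgebra.ι ℕ (some (Sum.inl x)) ∧
        q = FreeAlgebra.ι ℕ (some (Sum.inr x))) ∨
      (p = FreeAlgebra.ι ℕ (none : Option (X ⊕ X)) *
          FreeAlgebra.ι ℕ (some (Sum.inr x)) ∧
        q = FreeAlgebra.ι ℕ (some (Sum.inl x))))

namespace IntSemiringAux

variable {X : Type*}

/-- The target of each generator in `FreeAlgebra ℤ X`. -/
noncomputable def tgt : Option (X ⊕ X) → FreeAlgebra ℤ X
  | none => -1
  | some (Sum.inl x) => FreeAlgebra.ι ℤ x
  | some (Sum.inr x) => -FreeAlgebra.ι ℤ x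

noncomputable def phi : FreeAlgebra ℕ (Option (X ⊕ X)) →ₐ[ℕ] FreeAlgebra ℤ X :=
  FreeAlgebra.lift ℕ tgt

lemma phi_resp {a b : FreeAlgebra ℕ (Option (X ⊕ X))}
    (h : ringConGen (intSemiringRel X) a b) : phi a = phi b := by
  induction h with
  | of a b h =>
    obtain ⟨x, rfl, rfl⟩ | ⟨rfl, rfl⟩ | ⟨x, y, rfl, rfl⟩ | ⟨x, y, rfl, rfl⟩ |
        ⟨x, ⟨rfl, rfl⟩ | ⟨rfl, rfl⟩⟩ | ⟨x, ⟨rfl, rfl⟩ | ⟨rfl, rfl⟩⟩ := h <;>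
      simp [phi, tgt]
  | refl => rfl
  | symm _ ih => exact ih.symm
  | trans _ _ ih1 ih2 => exact ih1.trans ih2
  | add _ _ ih1 ih2 => simp [ih1, ih2]
  | mul _ _ ih1 ih2 => simp [ih1, ih2]

noncomputable def f (X : Type*) :
    (ringConGen (intSemiringRel X)).Quotient →+* FreeAlgebra ℤ X where
  toFun := fun q => Quotient.liftOn' q phi fun _ _ h => phi_resp h
  map_one' := map_one phi
  map_zero' := map_zero phi
  map_mul' := fun a b => Quotient.inductionOn₂' a b fun a b => map_mul phi a b
  map_add' := fun a b => Quotient.inductionOn₂' a b fun a b => map_add phi a b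

lemma f_mk (p : FreeAlgebra ℕ (Option (X ⊕ X))) :
    f X (p : (ringConGen (intSemiringRel X)).Quotient) = phi p := rfl

lemma mk_rel {a b : FreeAlgebra ℕ (Option (X ⊕ X))} (h : intSemiringRel X a b) :
    (a : (ringConGen (intSemiringRel X)).Quotient) = b :=
  (RingCon.eq _).mpr (RingConGen.Rel.of _ _ h)

lemma rel_inv (x : X) :
    ((FreeAlgebra.ι ℕ (some (Sum.inl x)) : FreeAlgebra ℕ (Option (X ⊕ X))) :
        (ringConGen (intSemiringRel X)).Quotient) +
      (FreeAlgebra.ι ℕ (some (Sum.inr x)) : FreeAlgebra ℕ (Option (X ⊕ X))) = 0 := by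
  rw [← RingCon.coe_add, ← RingCon.coe_zero]
  exact mk_rel (Or.inl ⟨x, rfl, rfl⟩)

lemma rel_one :
    (1 : (ringConGen (intSemiringRel X)).Quotient) +
      ((FreeAlgebra.ι ℕ (none : Option (X ⊕ X)) : FreeAlgebra ℕ (Option (X ⊕ X))) :
        (ringConGen (intSemiringRel X)).Quotient) = 0 := by
  rw [← RingCon.coe_one, ← RingCon.coe_add, ← RingCon.coe_zero]
  exact mk_rel (Or.inr (Or.inl ⟨rfl, rfl⟩))

lemma exists_neg (a : (ringConGen (intSemiringRel X)).Quotient) : ∃ b, a + b = 0 := by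
  induction a using Quotient.inductionOn' with
  | h p =>
    show ∃ b, (p : (ringConGen (intSemiringRel X)).Quotient) + b = 0
    induction p using FreeAlgebra.induction with
    | grade0 n =>
      refine ⟨(n : (ringConGen (intSemiringRel X)).Quotient) *
          (FreeAlgebra.ι ℕ (none : Option (X ⊕ X)) : FreeAlgebra ℕ (Option (X ⊕ X))), ?_⟩
      have : ((algebraMap ℕ (FreeAlgebra ℕ (Option (X ⊕ X))) n : FreeAlgebra ℕ (Option (X ⊕ X))) :
          (ringConGen (intSemiringRel X)).Quotient) = (n : (ringConGen (intSemiringRel X)).Quotient) := by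
        simp [map_natCast (RingCon.mk' (ringConGen (intSemiringRel X)))]
      rw [this]
      calc (n : (ringConGen (intSemiringRel X)).Quotient) + n * _
          = n * (1 + ((FreeAlgebra.ι ℕ (none : Option (X ⊕ X)) : FreeAlgebra ℕ (Option (X ⊕ X))) :
              (ringConGen (intSemiringRel X)).Quotient)) := by rw [mul_add, mul_one]
        _ = 0 := by rw [rel_one, mul_zero]
    | grade1 v =>
      match v with
      | some (Sum.inl x) => exact ⟨_, rel_inv x⟩
      | some (Sum.inr x) => exact ⟨_, by rw [add_comm]; exact rel_inv x⟩
      | none => exact ⟨1, by rw [add_comm]; exact rel_one⟩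
    | mul p q hp hq =>
      obtain ⟨bp, hbp⟩ := hp
      exact ⟨bp * q, by rw [RingCon.coe_mul, ← add_mul, hbp, zero_mul]⟩
    | add p q hp hq =>
      obtain ⟨bp, hbp⟩ := hp
      obtain ⟨bq, hbq⟩ := hq
      exact ⟨bp + bq, by rw [RingCon.coe_add, add_add_add_comm, hbp, hbq, add_zero]⟩

end IntSemiringAux

/-- The semigroup ring `ℤ⟨X⟩` (the free `ℤ`-algebra on `X`, viewed as a
semiring) is isomorphic as a semiring to the quotient of the free semiring on
`X ∪ X⁻¹ ∪ {1⁻¹}` by the congruence generated by the relations above. -/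
theorem stmt_16 (X : Type*) :
    Nonempty ((ringConGen (intSemiringRel X)).Quotient ≃+* FreeAlgebra ℤ X) := by
  classical
  open IntSemiringAux in
  letI negQ : Neg (ringConGen (intSemiringRel X)).Quotient :=
    ⟨fun a => Classical.choose (exists_neg a)⟩
  letI ringQ : Ring (ringConGen (intSemiringRel X)).Quotient :=
    { (inferInstance : Semiring (ringConGen (intSemiringRel X)).Quotient), negQ with
      zsmul := zsmulRec
      neg_add_cancel := fun a => by
        rw [add_comm]; exact Classical.choose_spec (exists_neg a) }
  letI : Algebra ℤ (ringConGen (intSemiringRel X)).Quotient := Ring.toIntAlgebra _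
  let ψ : FreeAlgebra ℤ X →ₐ[ℤ] (ringConGen (intSemiringRel X)).Quotient :=
    FreeAlgebra.lift ℤ fun x =>
      ((FreeAlgebra.ι ℕ (some (Sum.inl x)) : FreeAlgebra ℕ (Option (X ⊕ X))) :
        (ringConGen (intSemiringRel X)).Quotient)
  have hfψ : ∀ a : FreeAlgebra ℤ X, IntSemiringAux.f X (ψ a) = a := by
    intro a
    induction a using FreeAlgebra.induction with
    | grade0 n =>
      rw [AlgHom.commutes]
      have : (algebraMap ℤ (ringConGen (intSemiringRel X)).Quotient n) =
          ((n : ℤ) : (ringConGen (intSemiringRel X)).Quotient) := by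
        simp [algebraMap_int_eq]
      rw [this, map_intCast]; exact (eq_intCast (algebraMap ℤ (FreeAlgebra ℤ X)) n).symm
    | grade1 x =>
      show IntSemiringAux.f X (ψ (FreeAlgebra.ι ℤ x)) = _
      rw [show ψ (FreeAlgebra.ι ℤ x) = _ from FreeAlgebra.lift_ι_apply _ _,
        IntSemiringAux.f_mk]
      simp [IntSemiringAux.phi, IntSemiringAux.tgt]
    | mul a b ha hb => rw [map_mul, map_mul, ha, hb]
    | add a b ha hb => rw [map_add, map_add, ha, hb]
  have hψf : ∀ q : (ringConGen (intSemiringRel X)).Quotient, ψ (IntSemiringAux.f X q) = q := by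
    intro q
    induction q using Quotient.inductionOn' with
    | h p =>
      show ψ (IntSemiringAux.f X (p : (ringConGen (intSemiringRel X)).Quotient)) =
        (p : (ringConGen (intSemiringRel X)).Quotient)
      induction p using FreeAlgebra.induction with
      | grade0 n =>
        rw [IntSemiringAux.f_mk, AlgHom.commutes]
        have h1 : (algebraMap ℕ (FreeAlgebra ℤ X) n) = ((n : ℤ) : FreeAlgebra ℤ X) := by
          simp
        have h2 : ((algebraMap ℕ (FreeAlgebra ℕ (Option (X ⊕ X))) n :
            FreeAlgebra ℕ (Option (X ⊕ X))) : (ringConGen (intSemiringRel X)).Quotient) =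
            (n : (ringConGen (intSemiringRel X)).Quotient) := by
          simp [map_natCast (RingCon.mk' (ringConGen (intSemiringRel X)))]
        rw [h1, map_intCast, h2]
        simp
      | grade1 v =>
        rw [IntSemiringAux.f_mk]
        match v with
        | some (Sum.inl x) =>
          show ψ (IntSemiringAux.phi (FreeAlgebra.ι ℕ (some (Sum.inl x)))) = _
          rw [show IntSemiringAux.phi (FreeAlgebra.ι ℕ (some (Sum.inl x))) =
            IntSemiringAux.tgt (some (Sum.inl x)) from FreeAlgebra.lift_ι_apply _ _]
          show ψ (FreeAlgebra.ι ℤ x) = _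
          exact FreeAlgebra.lift_ι_apply _ _
        | some (Sum.inr x) =>
          show ψ (IntSemiringAux.phi (FreeAlgebra.ι ℕ (some (Sum.inr x)))) = _
          rw [show IntSemiringAux.phi (FreeAlgebra.ι ℕ (some (Sum.inr x))) =
            IntSemiringAux.tgt (some (Sum.inr x)) from FreeAlgebra.lift_ι_apply _ _]
          show ψ (-FreeAlgebra.ι ℤ x) = _
          rw [map_neg, show ψ (FreeAlgebra.ι ℤ x) = _ from FreeAlgebra.lift_ι_apply _ _]
          exact (neg_eq_of_add_eq_zero_right (IntSemiringAux.rel_inv x))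
        | none =>
          show ψ (IntSemiringAux.phi (FreeAlgebra.ι ℕ (none : Option (X ⊕ X)))) = _
          rw [show IntSemiringAux.phi (FreeAlgebra.ι ℕ (none : Option (X ⊕ X))) =
            IntSemiringAux.tgt none from FreeAlgebra.lift_ι_apply _ _]
          show ψ (-1) = _
          rw [map_neg, map_one]
          exact (neg_eq_of_add_eq_zero_right IntSemiringAux.rel_one)
      | mul a b ha hb =>
        rw [RingCon.coe_mul, map_mul, map_mul, ha, hb]
      | add a b ha hb =>
        rw [RingCon.coe_add, map_add, map_add, ha, hb]
  exact ⟨⟨⟨IntSemiringAux.f X, ψ, hψf, hfψ⟩, map_mul _, map_add _⟩⟩
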